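/- Let σ be an index type, let R be the multivariate polynomial ring over 𝔽₂ = ℤ/2 in variables X_i for i ∈ σ, and let D be the unique 𝔽₂-linear derivation of R with D(X_i) = X_i² for all i (the algebraic model of the Steenrod square Sq¹). Then D carries homogeneous polynomials of degree k to homogeneous polynomials of degree k+1, D is injective on homogeneous polynomials of degree 1, and for every k ≥ 2 a homogeneous polynomial f of degree k satisfies D f = 0 if and only if f = D g for some homogeneous polynomial g of degree k−1. In other words, the sequence 0 → Sym¹ → Sym² → Sym³ → ⋯ given by D is exact. -/

import Mathlib

open MvPolynomial Finsupp

noncomputable section SteenrodAux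

variable {σ : Type}

/-! ### small arithmetic / finsupp helpers -/

lemma addself (x : MvPolynomial σ (ZMod 2)) : x + x = 0 := by
  rw [← two_smul (ZMod 2) x, show (2 : ZMod 2) = 0 by decide, zero_smul]

lemma cast_odd {n : ℕ} (h : Odd n) : (n : ZMod 2) = 1 := by
  obtain ⟨m, rfl⟩ := h
  push_cast
  rw [show (2 : ZMod 2) = 0 by decide, zero_mul, zero_add]

lemma cast_even {n : ℕ} (h : Even n) : (n : ZMod 2) = 0 := by
  obtain ⟨m, rfl⟩ := h
  push_cast
  rw [← two_mul, show (2 : ZMod 2) = 0 by decide, zero_mul]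

lemma deg_add (a b : σ →₀ ℕ) : (a + b).degree = a.degree + b.degree := by
  simp only [Finsupp.degree_eq_weight_one, map_add]

lemma deg_single (i : σ) : (Finsupp.single i 1 : σ →₀ ℕ).degree = 1 := by
  exact Finsupp.degree_single i 1

lemma supp_add_single (a : σ →₀ ℕ) (i : σ) (hi : i ∈ a.support) :
    (a + Finsupp.single i 1).support = a.support := by
  ext x
  rw [Finsupp.mem_support_iff] at hi ⊢
  rw [Finsupp.mem_support_iff]
  by_cases hx : x = i
  · subst hx; simp [hi]
  · simp [Finsupp.single_apply, Ne.symm hx]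

lemma supp_sub_single (a : σ →₀ ℕ) (i : σ) (hi : 2 ≤ a i) :
    (a - Finsupp.single i 1).support = a.support := by
  ext x
  rw [Finsupp.mem_support_iff, Finsupp.mem_support_iff]
  by_cases hx : x = i
  · subst hx; simp [Finsupp.tsub_apply, Finsupp.single_apply]; omega
  · simp [Finsupp.tsub_apply, Finsupp.single_apply, Ne.symm hx]

lemma sub_add_two (a : σ →₀ ℕ) (i : σ) (hi : 1 ≤ a i) :
    a - Finsupp.single i 1 + Finsupp.single i 2 = a + Finsupp.single i 1 := by
  have h1 : Finsupp.single i 1 ≤ a := Finsupp.single_le_iff.mpr hi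
  calc a - Finsupp.single i 1 + Finsupp.single i 2
      = a - Finsupp.single i 1 + (Finsupp.single i 1 + Finsupp.single i 1) := by
        rw [← Finsupp.single_add]
    _ = a - Finsupp.single i 1 + Finsupp.single i 1 + Finsupp.single i 1 := by
        rw [add_assoc]
    _ = a + Finsupp.single i 1 := by rw [tsub_add_cancel_of_le h1]

lemma min'_congr {s t : Finset σ} [LinearOrder σ] (hs : s.Nonempty) (ht : t.Nonempty)
    (h : s = t) : s.min' hs = t.min' ht := by subst h; rfl

lemma swap_sub (a : σ →₀ ℕ) (i j : σ) (hj : 1 ≤ a j) :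
    a + Finsupp.single i 1 - Finsupp.single j 1
      = a - Finsupp.single j 1 + Finsupp.single i 1 := by
  ext x
  simp only [Finsupp.add_apply, Finsupp.tsub_apply, Finsupp.single_apply]
  rcases eq_or_ne j x with rfl | h1
  · rcases eq_or_ne i j with rfl | h2 <;> simp [*] <;> omega
  · rcases eq_or_ne i x with rfl | h2 <;> simp [*] <;> omega

/-! ### The derivation on monomials, and `D ∘ D = 0` -/

variable (D : Derivation (ZMod 2) (MvPolynomial σ (ZMod 2)) (MvPolynomial σ (ZMod 2)))
  (hD : ∀ i : σ, D (X i) = X i ^ 2)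

include hD in
lemma Dm (a : σ →₀ ℕ) :
    D (monomial a 1) =
      ∑ i ∈ a.support, monomial (a + Finsupp.single i 1) ((a i : ZMod 2)) := by
  have hDeq : D = mkDerivation (ZMod 2) (fun i => (X i : MvPolynomial σ (ZMod 2)) ^ 2) :=
    derivation_ext fun i => by rw [hD, mkDerivation_X]
  rw [hDeq, mkDerivation_monomial, one_smul, Finsupp.sum]
  refine Finset.sum_congr rfl fun i hi => ?_
  rw [Finsupp.mem_support_iff] at hi
  rw [X_pow_eq_monomial, smul_eq_mul, monomial_mul, mul_one, sub_add_two a i (by omega)]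

include hD in
lemma DD (f : MvPolynomial σ (ZMod 2)) : D (D f) = 0 := by
  induction f using MvPolynomial.induction_on with
  | C r => rw [show (C r : MvPolynomial σ (ZMod 2)) = algebraMap (ZMod 2) _ r from rfl,
      Derivation.map_algebraMap, map_zero]
  | add p q hp hq => rw [map_add, map_add, hp, hq, add_zero]
  | mul_X p i hp =>
    have hX2 : D ((X i : MvPolynomial σ (ZMod 2)) ^ 2) = 0 := by
      rw [pow_two, Derivation.leibniz]
      simp only [smul_eq_mul]
      exact addself _
    rw [Derivation.leibniz]
    simp only [smul_eq_mul]
    rw [map_add, Derivation.leibniz, Derivation.leibniz]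
    simp only [smul_eq_mul]
    rw [hD i, hX2, hp]
    simp only [mul_zero, zero_add, add_zero]
    rw [mul_comm (D p)]
    exact addself _

include hD in
lemma D_homog (k : ℕ) (f : MvPolynomial σ (ZMod 2)) (hf : f.IsHomogeneous k) :
    (D f).IsHomogeneous (k + 1) := by
  conv_lhs => rw [← support_sum_monomial_coeff f]
  rw [map_sum]
  refine IsHomogeneous.sum _ _ _ fun a hamem => ?_
  have hdeg : a.degree = k := by
    rw [Finsupp.degree_eq_weight_one]
    exact hf (Finsupp.mem_support_iff.mp hamem)
  have hsm : monomial a (coeff a f) = (coeff a f) • monomial a 1 := by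
    rw [smul_monomial, smul_eq_mul, mul_one]
  rw [hsm, Derivation.map_smul]
  have hbase : (D (monomial a 1)).IsHomogeneous (k + 1) := by
    rw [Dm D hD a]
    refine IsHomogeneous.sum _ _ _ fun i _ => ?_
    refine isHomogeneous_monomial _ ?_
    rw [deg_add, deg_single, hdeg]
  exact (mem_homogeneousSubmodule _ _).mp
    ((homogeneousSubmodule σ (ZMod 2) (k + 1)).smul_mem (coeff a f)
      ((mem_homogeneousSubmodule _ _).mpr hbase))

/-! ### The contracting homotopy -/

variable [LinearOrder σ]

/-- index of the minimal variable occurring in a monomial -/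
def jj (a : σ →₀ ℕ) (ha : a ≠ 0) : σ :=
  a.support.min' (Finsupp.support_nonempty_iff.mpr ha)

lemma jj_mem (a : σ →₀ ℕ) (ha : a ≠ 0) : jj a ha ∈ a.support :=
  Finset.min'_mem _ _

lemma jj_congr {a b : σ →₀ ℕ} (ha : a ≠ 0) (hb : b ≠ 0)
    (h : a.support = b.support) : jj a ha = jj b hb :=
  min'_congr _ _ h

def hcomp (a : σ →₀ ℕ) : ZMod 2 →ₗ[ZMod 2] MvPolynomial σ (ZMod 2) :=
  if ha : a ≠ 0 then
    (if Even (a (jj a ha)) then monomial (a - Finsupp.single (jj a ha) 1) else 0)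
  else 0

def hh : MvPolynomial σ (ZMod 2) →ₗ[ZMod 2] MvPolynomial σ (ZMod 2) :=
  Finsupp.lsum (ZMod 2) hcomp ∘ₗ (AddMonoidAlgebra.coeffLinearEquiv (ZMod 2)).toLinearMap

lemma hh_monomial (a : σ →₀ ℕ) (r : ZMod 2) :
    hh (monomial a r) = hcomp a r := by
  rw [← single_eq_monomial]
  exact Finsupp.lsum_single (ZMod 2) hcomp a r

lemma hh_monomial_even (a : σ →₀ ℕ) (ha : a ≠ 0) (he : Even (a (jj a ha))) (r : ZMod 2) :
    hh (monomial a r) = monomial (a - Finsupp.single (jj a ha) 1) r := by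
  rw [hh_monomial]; unfold hcomp
  rw [dif_pos ha, if_pos he]

lemma hh_monomial_odd (a : σ →₀ ℕ) (ha : a ≠ 0) (he : ¬ Even (a (jj a ha))) (r : ZMod 2) :
    hh (monomial a r) = 0 := by
  rw [hh_monomial]; unfold hcomp
  rw [dif_pos ha, if_neg he]
  rfl

include hD in
lemma key (a : σ →₀ ℕ) (ha : a ≠ 0) :
    D (hh (monomial a 1)) + hh (D (monomial a 1)) = monomial a 1 := by
  have hjmem : jj a ha ∈ a.support := jj_mem a ha
  have hjpos : 1 ≤ a (jj a ha) := by
    rw [Finsupp.mem_support_iff] at hjmem; omega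
  by_cases hpar : Even (a (jj a ha))
  · -- even case
    have haj2 : 2 ≤ a (jj a ha) := by
      obtain ⟨m, hm⟩ := hpar; omega
    have hbsupp : (a - Finsupp.single (jj a ha) 1).support = a.support :=
      supp_sub_single a (jj a ha) haj2
    have hbne : a - Finsupp.single (jj a ha) 1 ≠ 0 := by
      intro h0
      rw [h0] at hbsupp
      simp only [Finsupp.support_zero] at hbsupp
      rw [← hbsupp] at hjmem
      exact absurd hjmem (Finset.notMem_empty _)
    have hjjb : jj (a - Finsupp.single (jj a ha) 1) hbne = jj a ha :=
      jj_congr hbne ha hbsupp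
    have hbj : ((a - Finsupp.single (jj a ha) 1 : σ →₀ ℕ)) (jj a ha) = a (jj a ha) - 1 := by
      simp [Finsupp.tsub_apply, Finsupp.single_apply]
    have hle : Finsupp.single (jj a ha) 1 ≤ a := Finsupp.single_le_iff.mpr hjpos
    have hba : a - Finsupp.single (jj a ha) 1 + Finsupp.single (jj a ha) 1 = a :=
      tsub_add_cancel_of_le hle
    rw [hh_monomial_even a ha hpar 1, Dm D hD (a - Finsupp.single (jj a ha) 1), hbsupp,
      Dm D hD a, map_sum,
      ← Finset.add_sum_erase _ _ hjmem,
      ← Finset.add_sum_erase _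
        (fun i => hh (monomial (a + Finsupp.single i 1) ((a i : ZMod 2)))) hjmem]
    have hterm1 : monomial (a - Finsupp.single (jj a ha) 1 + Finsupp.single (jj a ha) 1)
        ((((a - Finsupp.single (jj a ha) 1 : σ →₀ ℕ)) (jj a ha) : ZMod 2)) = monomial a 1 := by
      rw [hba, hbj, cast_odd (Nat.Even.sub_odd hjpos hpar odd_one)]
    have hterm2 : hh (monomial (a + Finsupp.single (jj a ha) 1) ((a (jj a ha) : ZMod 2))) = 0 := by
      rw [cast_even hpar, monomial_zero, map_zero]
    rw [hterm1, hterm2, zero_add]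
    have hsum : ∀ i ∈ a.support.erase (jj a ha),
        hh (monomial (a + Finsupp.single i 1) ((a i : ZMod 2)))
          = monomial (a - Finsupp.single (jj a ha) 1 + Finsupp.single i 1)
              ((((a - Finsupp.single (jj a ha) 1 : σ →₀ ℕ)) i : ZMod 2)) := by
      intro i hi
      obtain ⟨hij, himem⟩ := Finset.mem_erase.mp hi
      have hine : a + Finsupp.single i 1 ≠ 0 := by
        intro h0
        have := congrArg (fun v => v i) h0
        simp [Finsupp.add_apply, Finsupp.single_apply] at this
      have hsupp' : (a + Finsupp.single i 1).support = a.support := supp_add_single a i himem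
      have hjj' : jj (a + Finsupp.single i 1) hine = jj a ha := jj_congr hine ha hsupp'
      have hval : ((a + Finsupp.single i 1 : σ →₀ ℕ)) (jj a ha) = a (jj a ha) := by
        simp [Finsupp.add_apply, Finsupp.single_apply, hij]
      rw [hh_monomial_even _ hine (by rw [hjj', hval]; exact hpar), hjj']
      congr 1
      · exact congrArg monomial (swap_sub a i (jj a ha) hjpos)
      · congr 1
        simp [Finsupp.tsub_apply, Finsupp.single_apply, Ne.symm hij]
    rw [Finset.sum_congr rfl hsum, add_assoc, addself, add_zero]
  · -- odd case
    rw [hh_monomial_odd a ha hpar 1, map_zero, zero_add, Dm D hD a, map_sum]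
    rw [Finset.sum_eq_single_of_mem (jj a ha) hjmem ?_]
    · have hine : a + Finsupp.single (jj a ha) 1 ≠ 0 := by
        intro h0
        have := congrArg (fun v => v (jj a ha)) h0
        simp [Finsupp.add_apply, Finsupp.single_apply] at this
      have hsupp' : (a + Finsupp.single (jj a ha) 1).support = a.support :=
        supp_add_single a (jj a ha) hjmem
      have hjj' : jj (a + Finsupp.single (jj a ha) 1) hine = jj a ha := jj_congr hine ha hsupp'
      have hval : ((a + Finsupp.single (jj a ha) 1 : σ →₀ ℕ)) (jj a ha) = a (jj a ha) + 1 := by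
        simp [Finsupp.add_apply, Finsupp.single_apply]
      have hev : Even (((a + Finsupp.single (jj a ha) 1 : σ →₀ ℕ))
          (jj (a + Finsupp.single (jj a ha) 1) hine)) := by
        rw [hjj', hval]
        exact Odd.add_one (Nat.not_even_iff_odd.mp hpar)
      rw [hh_monomial_even _ hine hev, hjj', add_tsub_cancel_right,
        cast_odd (Nat.not_even_iff_odd.mp hpar)]
    · intro i himem hij
      have hine : a + Finsupp.single i 1 ≠ 0 := by
        intro h0
        have := congrArg (fun v => v i) h0
        simp [Finsupp.add_apply, Finsupp.single_apply] at this
      have hsupp' : (a + Finsupp.single i 1).support = a.support := supp_add_single a i himem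
      have hjj' : jj (a + Finsupp.single i 1) hine = jj a ha := jj_congr hine ha hsupp'
      have hval : ((a + Finsupp.single i 1 : σ →₀ ℕ)) (jj a ha) = a (jj a ha) := by
        simp [Finsupp.add_apply, Finsupp.single_apply, hij]
      exact hh_monomial_odd _ hine (by rw [hjj', hval]; exact hpar) _

include hD in
lemma homotopy (k : ℕ) (hk : 1 ≤ k) (f : MvPolynomial σ (ZMod 2)) (hf : f.IsHomogeneous k) :
    D (hh f) + hh (D f) = f := by
  conv_rhs => rw [← support_sum_monomial_coeff f]
  conv_lhs => rw [← support_sum_monomial_coeff f]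
  rw [map_sum, map_sum, map_sum, map_sum, ← Finset.sum_add_distrib]
  refine Finset.sum_congr rfl fun a hamem => ?_
  have hdeg : a.degree = k := by
    rw [Finsupp.degree_eq_weight_one]
    exact hf (Finsupp.mem_support_iff.mp hamem)
  have hane : a ≠ 0 := by
    intro h0
    rw [h0, map_zero] at hdeg
    omega
  have hsm : monomial a (coeff a f) = (coeff a f) • monomial a 1 := by
    rw [smul_monomial, smul_eq_mul, mul_one]
  rw [hsm, map_smul, Derivation.map_smul, Derivation.map_smul, map_smul, ← smul_add,
    key D hD a hane]

lemma hh_homog (k : ℕ) (f : MvPolynomial σ (ZMod 2)) (hf : f.IsHomogeneous k) :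
    (hh f).IsHomogeneous (k - 1) := by
  conv_lhs => rw [← support_sum_monomial_coeff f]
  rw [map_sum]
  refine IsHomogeneous.sum _ _ _ fun a hamem => ?_
  have hdeg : a.degree = k := by
    rw [Finsupp.degree_eq_weight_one]
    exact hf (Finsupp.mem_support_iff.mp hamem)
  rw [hh_monomial]
  unfold hcomp
  split_ifs with h1 h2
  · refine isHomogeneous_monomial _ ?_
    have hjpos : 1 ≤ a (jj a h1) := by
      have := jj_mem a h1
      rw [Finsupp.mem_support_iff] at this
      omega
    have hba : a - Finsupp.single (jj a h1) 1 + Finsupp.single (jj a h1) 1 = a :=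
      tsub_add_cancel_of_le (Finsupp.single_le_iff.mpr hjpos)
    have := congrArg Finsupp.degree hba
    rw [deg_add, deg_single] at this
    omega
  · rw [LinearMap.zero_apply]
    exact isHomogeneous_zero _ _ _
  · rw [LinearMap.zero_apply]
    exact isHomogeneous_zero _ _ _

lemma hh_deg1 (f : MvPolynomial σ (ZMod 2)) (hf : f.IsHomogeneous 1) : hh f = 0 := by
  conv_lhs => rw [← support_sum_monomial_coeff f]
  rw [map_sum]
  refine Finset.sum_eq_zero fun a hamem => ?_
  have hdeg : a.degree = 1 := by
    rw [Finsupp.degree_eq_weight_one]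
    exact hf (Finsupp.mem_support_iff.mp hamem)
  have hane : a ≠ 0 := by
    intro h0
    rw [h0, map_zero] at hdeg
    omega
  apply hh_monomial_odd a hane
  have h1 : a (jj a hane) ≤ 1 := hdeg ▸ Finsupp.le_degree _ a
  have h2 : 1 ≤ a (jj a hane) := by
    have := jj_mem a hane
    rw [Finsupp.mem_support_iff] at this
    omega
  rw [show a (jj a hane) = 1 by omega]
  decide

end SteenrodAux

theorem steenrod_square_one_exact (σ : Type) :
    (∃! D : Derivation (ZMod 2) (MvPolynomial σ (ZMod 2)) (MvPolynomial σ (ZMod 2)),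
      ∀ i : σ, D (X i) = X i ^ 2) ∧
    ∀ D : Derivation (ZMod 2) (MvPolynomial σ (ZMod 2)) (MvPolynomial σ (ZMod 2)),
      (∀ i : σ, D (X i) = X i ^ 2) →
      (∀ (k : ℕ) (f : MvPolynomial σ (ZMod 2)),
          f.IsHomogeneous k → (D f).IsHomogeneous (k + 1)) ∧
      (∀ f : MvPolynomial σ (ZMod 2), f.IsHomogeneous 1 → D f = 0 → f = 0) ∧
      (∀ k : ℕ, 2 ≤ k → ∀ f : MvPolynomial σ (ZMod 2), f.IsHomogeneous k →
          (D f = 0 ↔ ∃ g : MvPolynomial σ (ZMod 2), g.IsHomogeneous (k - 1) ∧ f = D g)) := by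
  letI : LinearOrder σ := IsWellOrder.linearOrder WellOrderingRel
  constructor
  · exact ⟨mkDerivation (ZMod 2) (fun i => X i ^ 2),
      fun i => mkDerivation_X _ _ _,
      fun D' hD' => derivation_ext fun i => by rw [hD', mkDerivation_X]⟩
  · intro D hD
    refine ⟨D_homog D hD, ?_, ?_⟩
    · intro f hf hDf
      have h := homotopy D hD 1 le_rfl f hf
      rw [hDf, map_zero, add_zero, hh_deg1 f hf, map_zero] at h
      exact h.symm
    · intro k hk f hf
      constructor
      · intro hDf
        refine ⟨hh f, hh_homog k f hf, ?_⟩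
        have h := homotopy D hD k (by omega) f hf
        rw [hDf, map_zero, add_zero] at h
        exact h.symm
      · rintro ⟨g, hg, rfl⟩
        exact DD D hD g
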